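/- (The malicious agent's measurement statistics carry no information about the message.) Let |Φ⟩₁ ∈ EuclideanSpace ℂ (Fin 4 → ZMod 2) be the state obtained by applying CNOT (control s₁, target s₂) and then Hadamard on s₁ to (α|0⟩ + β|1⟩) ⊗ W₃, where α, β ∈ ℂ satisfy |α|² + |β|² = 1 and the qubits are ordered (s₁, s₂, r, m). Then the Born-rule probability that a computational-basis measurement of the malicious qubit m yields 1 equals 1/3, and the probability that it yields 0 equals 2/3; in particular these probabilities are independent of α and β. -/

import Mathlib

/-- Amplitude of the 3-qubit W state at bitstring `(a, b, c)`. -/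
noncomputable def w3amp (a b c : ZMod 2) : ℂ :=
  if (a = 1 ∧ b = 0 ∧ c = 0) ∨ (a = 0 ∧ b = 1 ∧ c = 0) ∨ (a = 0 ∧ b = 0 ∧ c = 1)
  then ((1 / Real.sqrt 3 : ℝ) : ℂ) else 0

/-- The joint state `φ ⊗ W₃` with `φ = α|0⟩ + β|1⟩` on qubit `s₁ = 0` and the
3-qubit W state on qubits `(s₂, r, m) = (1, 2, 3)`. -/
noncomputable def jointState (α β : ℂ) : EuclideanSpace ℂ (Fin 4 → ZMod 2) :=
  WithLp.toLp 2 (fun x => (if x 0 = 0 then α else β) * w3amp (x 1) (x 2) (x 3))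

/-- CNOT with control qubit `0` and target qubit `1` (a self-inverse basis permutation). -/
noncomputable def cnot01 (ψ : EuclideanSpace ℂ (Fin 4 → ZMod 2)) :
    EuclideanSpace ℂ (Fin 4 → ZMod 2) :=
  WithLp.toLp 2 (fun x => ψ (Function.update x 1 (x 1 + x 0)))

/-- Hadamard gate on qubit `0`. -/
noncomputable def had0 (ψ : EuclideanSpace ℂ (Fin 4 → ZMod 2)) :
    EuclideanSpace ℂ (Fin 4 → ZMod 2) :=
  WithLp.toLp 2 (fun x => ((1 / Real.sqrt 2 : ℝ) : ℂ) *
    (ψ (Function.update x 0 0) + (if x 0 = 0 then 1 else -1) * ψ (Function.update x 0 1)))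

/-- The state `|Φ⟩₁` obtained by applying CNOT (control `s₁`, target `s₂`) and then
Hadamard on `s₁` to `(α|0⟩ + β|1⟩) ⊗ W₃`. -/
noncomputable def Phi1 (α β : ℂ) : EuclideanSpace ℂ (Fin 4 → ZMod 2) :=
  had0 (cnot01 (jointState α β))

/-- Computational-basis vector `|b₀b₁b₂b₃⟩`. -/
noncomputable def ket4 (b0 b1 b2 b3 : ZMod 2) : EuclideanSpace ℂ (Fin 4 → ZMod 2) :=
  EuclideanSpace.single ![b0, b1, b2, b3] 1

def tupEquiv : (ZMod 2 × ZMod 2 × ZMod 2 × ZMod 2) ≃ (Fin 4 → ZMod 2) where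
  toFun p := ![p.1, p.2.1, p.2.2.1, p.2.2.2]
  invFun x := (x 0, x 1, x 2, x 3)
  left_inv := by decide
  right_inv := by decide

lemma sum_pi4 (f : (Fin 4 → ZMod 2) → ℝ) :
    ∑ x : Fin 4 → ZMod 2, f x
      = ∑ a : ZMod 2, ∑ b : ZMod 2, ∑ c : ZMod 2, ∑ d : ZMod 2, f ![a,b,c,d] := by
  rw [← Fintype.sum_equiv tupEquiv (fun p => f (tupEquiv p)) f (fun p => rfl)]
  simp [Fintype.sum_prod_type, tupEquiv]

lemma sum2 (f : ZMod 2 → ℝ) : ∑ i : ZMod 2, f i = f 0 + f 1 := by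
  have h : (Finset.univ : Finset (ZMod 2)) = {0, 1} := by decide
  rw [h, Finset.sum_insert (by decide), Finset.sum_singleton]

lemma v0 (a b c d : ZMod 2) : (![a,b,c,d] : Fin 4 → ZMod 2) 0 = a := rfl
lemma v1 (a b c d : ZMod 2) : (![a,b,c,d] : Fin 4 → ZMod 2) 1 = b := rfl
lemma v2 (a b c d : ZMod 2) : (![a,b,c,d] : Fin 4 → ZMod 2) 2 = c := rfl
lemma v3 (a b c d : ZMod 2) : (![a,b,c,d] : Fin 4 → ZMod 2) 3 = d := rfl

lemma phi1_eval (α β : ℂ) (a b c d : ZMod 2) :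
    Phi1 α β ![a,b,c,d] = ((1 / Real.sqrt 2 : ℝ) : ℂ) *
      (α * w3amp b c d + (if a = 0 then 1 else -1) * (β * w3amp (b+1) c d)) := by
  simp [Phi1, had0, cnot01, jointState, PiLp.toLp_apply, Function.update_apply, v0, v1, v2, v3,
    show ((3:Fin 4) ≠ 0) from by decide, show ((3:Fin 4) ≠ 1) from by decide,
    show ((2:Fin 4) ≠ 0) from by decide, show ((2:Fin 4) ≠ 1) from by decide,
    show ((1:Fin 4) ≠ 0) from by decide, show ((0:Fin 4) ≠ 1) from by decide]
  by_cases ha : a = 0 <;> simp [ha]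


theorem stmt10 (α β : ℂ) (h : ‖α‖ ^ 2 + ‖β‖ ^ 2 = 1) :
    (∑ x ∈ Finset.univ.filter (fun x : Fin 4 → ZMod 2 => x 3 = 1),
        ‖Phi1 α β x‖ ^ 2 = 1 / 3) ∧
    (∑ x ∈ Finset.univ.filter (fun x : Fin 4 → ZMod 2 => x 3 = 0),
        ‖Phi1 α β x‖ ^ 2 = 2 / 3) := by
  have h2 : Real.sqrt 2 ^ 2 = 2 := Real.sq_sqrt (by norm_num)
  have h3 : Real.sqrt 3 ^ 2 = 3 := Real.sq_sqrt (by norm_num)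
  constructor <;>
  · rw [Finset.sum_filter, sum_pi4]
    simp only [sum2, v3, phi1_eval, w3amp, show ((2:ZMod 2) = 0) from by decide, show ((1+1:ZMod 2) = 0) from by decide,
      show ((1:ZMod 2) ≠ 0) from by decide, show ((0:ZMod 2) ≠ 1) from by decide]
    norm_num [show ((2:ZMod 2) = 0) from by decide, show ((2:ZMod 2) ≠ 1) from by decide, norm_mul, Complex.norm_real, Real.norm_eq_abs, abs_of_nonneg (Real.sqrt_nonneg 2),
      abs_of_nonneg (Real.sqrt_nonneg 3), mul_pow, h2, h3]
    nlinarith [h, norm_nonneg α, norm_nonneg β]
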